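/- arXiv:2508.09379 — 7 statements merged into one kernel-verified Lean document; each statement's English description precedes it below -/
import Mathlib

section
/- Let R be a commutative ring, A an Azumaya algebra over R, and M an R-module. Then the R-linear map M → A ⊗[R] M given by m ↦ 1 ⊗ m is injective, and its image is exactly the centralizer Z(A ⊗[R] M) = {x ∈ A ⊗[R] M : a·x = x·a for all a ∈ A}. In particular Z(A ⊗[R] M) ≅ M as R-modules. -/
open TensorProduct MulOpposite

/-- The canonical map `A ⊗[R] Aᵐᵒᵖ → End_R(A)`, sending `a ⊗ b` to `x ↦ a * x * b.unop`. -/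
noncomputable def mulLeftRight (R A : Type*) [CommRing R] [Ring A] [Algebra R A] :
    A ⊗[R] Aᵐᵒᵖ →ₗ[R] (A →ₗ[R] A) :=
  TensorProduct.lift <| LinearMap.mk₂ R
    (fun a b => (LinearMap.mulLeft R a).comp (LinearMap.mulRight R b.unop))
    (fun a₁ a₂ b => by ext x; simp [add_mul])
    (fun r a b => by ext x; simp [smul_mul_assoc])
    (fun a b₁ b₂ => by ext x; simp [mul_add])
    (fun r a b => by ext x; simp [mul_smul_comm])

/-- `A` is an Azumaya algebra over the commutative ring `R`: it is a faithful finitely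
generated projective `R`-module and `A ⊗[R] Aᵐᵒᵖ → End_R(A)`, `a ⊗ b ↦ (x ↦ a·x·b)`,
is bijective. -/
structure IsAzumayaAlg (R A : Type*) [CommRing R] [Ring A] [Algebra R A] : Prop where
  finite : Module.Finite R A
  projective : Module.Projective R A
  faithful : FaithfulSMul R A
  bij : Function.Bijective (mulLeftRight R A)

section Aux

variable (R : Type*) [CommRing R] (A : Type*) [Ring A] [Algebra R A]
  (M : Type*) [AddCommGroup M] [Module R M]

/-- The action of `A ⊗[R] Aᵐᵒᵖ` on `A ⊗[R] M`, as an `R`-linear map. -/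
noncomputable def azAct : A ⊗[R] Aᵐᵒᵖ →ₗ[R] (A ⊗[R] M →ₗ[R] A ⊗[R] M) :=
  TensorProduct.lift <| LinearMap.mk₂ R
    (fun a b => (DistribSMul.toLinearMap R (A ⊗[R] M) a) ∘ₗ
       (DistribSMul.toLinearMap R (A ⊗[R] M) b))
    (fun a₁ a₂ b => LinearMap.ext fun x => by
      simp only [LinearMap.coe_comp, Function.comp_apply,
        DistribSMul.toLinearMap_apply, LinearMap.add_apply]
      rw [add_smul])
    (fun r a b => LinearMap.ext fun x => by
      simp only [LinearMap.coe_comp, Function.comp_apply,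
        DistribSMul.toLinearMap_apply, LinearMap.smul_apply]
      rw [smul_assoc])
    (fun a b₁ b₂ => LinearMap.ext fun x => by
      simp only [LinearMap.coe_comp, Function.comp_apply,
        DistribSMul.toLinearMap_apply, LinearMap.add_apply]
      rw [add_smul, smul_add])
    (fun r a b => LinearMap.ext fun x => by
      simp only [LinearMap.coe_comp, Function.comp_apply,
        DistribSMul.toLinearMap_apply, LinearMap.smul_apply]
      rw [smul_assoc, smul_comm])

lemma azAct_tmul (a : A) (b : Aᵐᵒᵖ) (x : A ⊗[R] M) :
    azAct R A M (a ⊗ₜ b) x = a • (b • x) := rfl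

lemma azAct_apply_tmul (u : A ⊗[R] Aᵐᵒᵖ) (c : A) (m : M) :
    azAct R A M u (c ⊗ₜ m) = (mulLeftRight R A u c) ⊗ₜ m := by
  induction u using TensorProduct.induction_on with
  | zero => simp
  | tmul a b =>
      rw [azAct_tmul]
      have hb : b • (c ⊗ₜ[R] m : A ⊗[R] M) = (c * b.unop) ⊗ₜ m := by
        rw [TensorProduct.smul_tmul']
        congr 1
      rw [hb, TensorProduct.smul_tmul', smul_eq_mul]
      simp [mulLeftRight, mul_assoc]
  | add u v hu hv => simp [map_add, hu, hv, TensorProduct.add_tmul]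

lemma azAct_central (u : A ⊗[R] Aᵐᵒᵖ) (x : A ⊗[R] M)
    (hx : ∀ a : A, a • x = op a • x) :
    azAct R A M u x = (mulLeftRight R A u 1) • x := by
  induction u using TensorProduct.induction_on with
  | zero => simp
  | tmul a b =>
      rw [azAct_tmul]
      have hb : b • x = b.unop • x := by
        conv_lhs => rw [← op_unop b]
        exact (hx b.unop).symm
      rw [hb, smul_smul]
      simp [mulLeftRight, mul_assoc]
  | add u v hu hv => simp [map_add, hu, hv, add_smul]

end Aux

/-- The map `M → A ⊗[R] M`, `m ↦ 1 ⊗ m` is injective with image exactly the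
centralizer `Z(A ⊗[R] M) = {x | a • x = x • a for all a ∈ A}` of `A` in the
`A`-bimodule `A ⊗[R] M`; in particular `Z(A ⊗[R] M) ≅ M`. -/
theorem stmt0 (R : Type*) [CommRing R] (A : Type*) [Ring A] [Algebra R A]
    (hA : IsAzumayaAlg R A) (M : Type*) [AddCommGroup M] [Module R M] :
    Function.Injective (fun m : M => (1 : A) ⊗ₜ[R] m) ∧
      Set.range (fun m : M => (1 : A) ⊗ₜ[R] m) =
        {x : A ⊗[R] M | ∀ a : A, a • x = op a • x} := by
  haveI := hA.finite
  haveI := hA.faithful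
  -- Step 1: a linear functional `t : A → R` with `t 1 = 1`.
  obtain ⟨t, ht1⟩ : ∃ t : A →ₗ[R] R, t 1 = 1 := by
    set ev : (A →ₗ[R] R) →ₗ[R] R :=
      (LinearMap.id : (A →ₗ[R] R) →ₗ[R] (A →ₗ[R] R)).flip 1 with hev
    have hevapp : ∀ f : A →ₗ[R] R, ev f = f 1 := fun f => rfl
    set J : Ideal R := LinearMap.range ev with hJ
    have hJtop : J = ⊤ := by
      by_contra hne
      obtain ⟨m, hm, hJm⟩ := Ideal.exists_le_maximal J hne
      -- 1 ∈ m • ⊤ in A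
      obtain ⟨s, hs⟩ := (Module.projective_def).1 hA.projective
      have hone : (1 : A) ∈ (m • ⊤ : Submodule R A) := by
        have h1 : (1 : A) = (s 1).sum fun a r => r • a := by
          conv_lhs => rw [← hs 1]
          simp [Finsupp.linearCombination_apply]
        rw [h1]
        refine Submodule.finsuppSum_mem _ _ _ _ fun a _ => ?_
        refine Submodule.smul_mem_smul ?_ trivial
        exact hJm ⟨(Finsupp.lapply a : (A →₀ R) →ₗ[R] R) ∘ₗ s, rfl⟩
      have htop : (⊤ : Submodule R A) ≤ m • ⊤ := by
        intro a _
        have hmul : ∀ y ∈ (m • ⊤ : Submodule R A), a * y ∈ (m • ⊤ : Submodule R A) := by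
          intro y hy
          refine Submodule.smul_induction_on hy (fun r hr x _ => ?_) (fun x y hx hy => ?_)
          · rw [mul_smul_comm]
            exact Submodule.smul_mem_smul hr trivial
          · rw [mul_add]; exact Submodule.add_mem _ hx hy
        simpa using hmul 1 hone
      obtain ⟨r, hr1, hr0⟩ :=
        Submodule.exists_sub_one_mem_and_smul_eq_zero_of_fg_of_le_smul m ⊤
          (Module.finite_def.1 hA.finite) htop
      have hr : r = 0 := by
        refine eq_of_smul_eq_smul (M := R) (α := A) fun a => ?_
        rw [hr0 a trivial, zero_smul]
      rw [hr] at hr1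
      have : (1 : R) ∈ m := by simpa using m.neg_mem hr1
      exact hm.ne_top (Ideal.eq_top_of_isUnit_mem m this isUnit_one)
    have h1 : (1 : R) ∈ J := hJtop ▸ Submodule.mem_top
    obtain ⟨t, ht⟩ := h1
    exact ⟨t, ht⟩
  -- Step 2: the element `e` with `mulLeftRight e = (fun x => t x • 1)`.
  set ω : A →ₗ[R] A := (Algebra.linearMap R A) ∘ₗ t with hω
  obtain ⟨e, he⟩ := hA.bij.2 ω
  have hω1 : mulLeftRight R A e 1 = 1 := by
    rw [he]; simp [hω, ht1]
  -- Injectivity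
  have hinj : Function.Injective (fun m : M => (1 : A) ⊗ₜ[R] m) := by
    set ψ : A ⊗[R] M →ₗ[R] M := TensorProduct.lift ((LinearMap.lsmul R M) ∘ₗ t) with hψ
    have hψ1 : ∀ m : M, ψ ((1 : A) ⊗ₜ[R] m) = m := by
      intro m; simp [hψ, ht1]
    intro m₁ m₂ h
    have := congrArg ψ h
    simpa [hψ1] using this
  refine ⟨hinj, ?_⟩
  ext x
  constructor
  · rintro ⟨m, rfl⟩ a
    simp only
    rw [TensorProduct.smul_tmul', TensorProduct.smul_tmul']
    simp
  · intro hx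
    have hfix : azAct R A M e x = x := by
      rw [azAct_central R A M e x hx, hω1, one_smul]
    have hrange : ∀ y : A ⊗[R] M,
        azAct R A M e y ∈ Set.range (fun m : M => (1 : A) ⊗ₜ[R] m) := by
      intro y
      induction y using TensorProduct.induction_on with
      | zero => exact ⟨0, by simp⟩
      | tmul c m =>
          refine ⟨t c • m, ?_⟩
          rw [azAct_apply_tmul, he]
          simp only [hω, LinearMap.comp_apply, Algebra.linearMap_apply,
            Algebra.algebraMap_eq_smul_one]
          rw [TensorProduct.smul_tmul]
      | add u v hu hv =>
          obtain ⟨mu, hmu⟩ := hu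
          obtain ⟨mv, hmv⟩ := hv
          refine ⟨mu + mv, ?_⟩
          simp only at hmu hmv ⊢
          rw [map_add, ← hmu, ← hmv, TensorProduct.tmul_add]
    rw [← hfix]
    exact hrange x
end

section
/- Let R be a commutative ring and A an Azumaya algebra over R. Then the unit map R → A (the algebra structure map r ↦ r·1) is an injective R-linear map whose cokernel A/R is a projective R-module; consequently R → A is a split injection of R-modules. -/
open TensorProduct MulOpposite

/-- For an Azumaya algebra `A` over `R`, the unit map `R → A`, `r ↦ r • 1`, is an injective
`R`-linear map whose cokernel `A/R` is a projective `R`-module; consequently it is a split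
injection of `R`-modules. -/
theorem stmt1 (R : Type*) [CommRing R] (A : Type*) [Ring A] [Algebra R A]
    (hA : IsAzumayaAlg R A) :
    Function.Injective (Algebra.linearMap R A) ∧
      Module.Projective R (A ⧸ LinearMap.range (Algebra.linearMap R A)) ∧
      ∃ g : A →ₗ[R] R, g.comp (Algebra.linearMap R A) = LinearMap.id := by
  haveI := hA.finite
  haveI := hA.projective
  haveI := hA.faithful
  -- The ideal of values `λ 1` for `λ : A →ₗ[R] R`.
  set J : Ideal R := LinearMap.range (LinearMap.applyₗ (1 : A) : (A →ₗ[R] R) →ₗ[R] R) with hJ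
  -- Every element of `A` lies in `J • ⊤`, using a finite dual basis.
  have hle : (⊤ : Submodule R A) ≤ J • (⊤ : Submodule R A) := by
    intro a _ha
    obtain ⟨n, f, g, -, -, hfg⟩ := Module.Finite.exists_comp_eq_id_of_projective R A
    have ha : a = ∑ i : Fin n, (g a i) • f ((Pi.single i 1 : Fin n → R)) := by
      have h0 : f (g a) = a := by
        have := congrArg (fun h : A →ₗ[R] A => h a) hfg
        simpa using this
      have hrepr : (g a) = ∑ i : Fin n, g a i • (Pi.single i 1 : Fin n → R) := by
        ext j
        simp [Pi.single_apply]
      conv_lhs => rw [← h0, hrepr]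
      rw [map_sum]
      simp
    rw [ha]
    refine Submodule.sum_mem _ fun i _ => Submodule.smul_mem_smul ?_ trivial
    -- `g a i = λ 1` for `λ := (coord i) ∘ g ∘ (mulRight a)`
    refine ⟨(LinearMap.proj i).comp (g.comp (LinearMap.mulRight R a)), ?_⟩
    simp
  -- Nakayama: `1 ∈ J`.
  have h1J : (1 : R) ∈ J := by
    obtain ⟨r, hr, hr0⟩ :=
      Submodule.exists_sub_one_mem_and_smul_eq_zero_of_fg_of_le_smul J ⊤
        (Module.Finite.fg_top (R := R) (M := A)) hle
    have hr' : r = 0 := by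
      refine FaithfulSMul.eq_of_smul_eq_smul (M := R) (α := A) (fun a => ?_)
      rw [hr0 a trivial, zero_smul]
    have : (-1 : R) ∈ J := by simpa [hr'] using hr
    simpa using J.neg_mem this
  obtain ⟨lam, hlam⟩ := h1J
  simp only [LinearMap.applyₗ_apply_apply] at hlam
  -- the splitting
  have hsplit : lam.comp (Algebra.linearMap R A) = LinearMap.id := by
    refine LinearMap.ext fun r => ?_
    simp [Algebra.algebraMap_eq_smul_one, hlam]
  -- injectivity
  have hinj : Function.Injective (Algebra.linearMap R A) := by
    intro x y hxy
    have := congrArg lam hxy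
    rw [← LinearMap.comp_apply, ← LinearMap.comp_apply, hsplit] at this
    simpa using this
  refine ⟨hinj, ?_, lam, hsplit⟩
  -- projectivity of the cokernel
  set u := Algebra.linearMap R A
  set q : A →ₗ[R] A := LinearMap.id - u.comp lam with hq
  have hker : LinearMap.range u ≤ LinearMap.ker q := by
    rintro _ ⟨r, rfl⟩
    have : lam (u r) = r := by
      have := congrArg (fun h : R →ₗ[R] R => h r) hsplit
      simpa using this
    simp [hq, this]
  set qbar : (A ⧸ LinearMap.range u) →ₗ[R] A := (LinearMap.range u).liftQ q hker with hqbar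
  refine Module.Projective.of_split qbar (LinearMap.range u).mkQ ?_
  refine LinearMap.ext fun x => ?_
  obtain ⟨a, rfl⟩ := (LinearMap.range u).mkQ_surjective x
  have h1 : qbar ((LinearMap.range u).mkQ a) = q a := by
    simp [hqbar]
  rw [LinearMap.comp_apply, h1, LinearMap.id_apply, hq]
  simp only [LinearMap.sub_apply, LinearMap.id_apply, LinearMap.comp_apply, map_sub]
  have : (LinearMap.range u).mkQ (u (lam a)) = 0 := by
    simp [Submodule.Quotient.mk_eq_zero]
  rw [this, sub_zero]
end

section
/- Let R be a commutative ring, A an Azumaya algebra over R, and M an R-module. Then the map η : M → Hom_{A-bimod}(A, A ⊗[R] M), sending m to the map a ↦ a ⊗ m, is a well-defined bijection (an isomorphism of R-modules) from M onto the set of A-bimodule homomorphisms from A to A ⊗[R] M. -/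
open TensorProduct MulOpposite

/-- Generator lemma: a faithful f.g. projective module has a "dual family" summing to 1. -/
lemma exists_dual_family (R A : Type*) [CommRing R] [AddCommGroup A] [Module R A]
    [Module.Finite R A] [Module.Projective R A] [FaithfulSMul R A] :
    ∃ (n : ℕ) (φ : Fin n → (A →ₗ[R] R)) (p : Fin n → A),
      ∑ k, φ k (p k) = 1 := by
  set S : Set R := {r | ∃ (f : A →ₗ[R] R) (a : A), f a = r} with hS
  set τ : Ideal R := Submodule.span R S with hτ
  obtain ⟨s, hs⟩ := Module.projective_def'.mp ‹Module.Projective R A›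
  have h1 : (⊤ : Submodule R A) ≤ τ • ⊤ := by
    intro a _
    have ha : a = (s a).sum fun i r => r • i := by
      conv_lhs => rw [← LinearMap.id_apply (R := R) a, ← hs]
      simp [Finsupp.linearCombination_apply]
    rw [ha, Finsupp.sum]
    refine Submodule.sum_mem _ fun i hi => ?_
    refine Submodule.smul_mem_smul ?_ trivial
    exact Submodule.subset_span ⟨(Finsupp.lapply i).comp s, a, rfl⟩
  obtain ⟨r, hr1, hr0⟩ :=
    Submodule.exists_sub_one_mem_and_smul_eq_zero_of_fg_of_le_smul τ ⊤
      (Module.Finite.fg_top) h1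
  have hr : r = 0 := by
    refine eq_of_smul_eq_smul (α := A) fun a => ?_
    rw [hr0 a trivial, zero_smul]
  have h1τ : (1 : R) ∈ τ := by
    have := neg_mem hr1
    rwa [hr, zero_sub, neg_neg] at this
  obtain ⟨n, c, g, hsum⟩ := Submodule.mem_span_set'.mp h1τ
  choose f a hfa using fun k => (g k).2
  exact ⟨n, fun k => c k • f k, a, by simpa [hfa] using hsum⟩

/-- The map `η : M → Hom_{A-bimod}(A, A ⊗[R] M)`, `m ↦ (a ↦ a ⊗ m)`, is a well-defined
bijection from `M` onto the set of `A`-bimodule homomorphisms `A → A ⊗[R] M`, i.e. additive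
maps commuting with both the left and the right `A`-actions.  Moreover it is `R`-linear. -/
theorem stmt3 (R : Type*) [CommRing R] (A : Type*) [Ring A] [Algebra R A]
    (hA : IsAzumayaAlg R A) (M : Type*) [AddCommGroup M] [Module R M] :
    ∃ e : M ≃ {ψ : A →+ A ⊗[R] M //
        (∀ a x : A, ψ (a * x) = a • ψ x) ∧ (∀ a x : A, ψ (x * a) = op a • ψ x)},
      (∀ (m : M) (a : A), (e m : A →+ A ⊗[R] M) a = a ⊗ₜ[R] m) ∧
      (∀ m m' : M, ((e (m + m') : A →+ A ⊗[R] M) : A → A ⊗[R] M) =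
        fun a => (e m : A →+ A ⊗[R] M) a + (e m' : A →+ A ⊗[R] M) a) ∧
      (∀ (r : R) (m : M), ((e (r • m) : A →+ A ⊗[R] M) : A → A ⊗[R] M) =
        fun a => r • (e m : A →+ A ⊗[R] M) a) := by
  haveI := hA.finite
  haveI := hA.projective
  haveI := hA.faithful
  obtain ⟨n, φ, p, hsum⟩ := exists_dual_family R A
  -- the "coefficient" map λ_φ : A ⊗ M → M
  set lam : (A →ₗ[R] R) → (A ⊗[R] M →ₗ[R] M) :=
    fun f => (TensorProduct.lid R M).toLinearMap ∘ₗ LinearMap.rTensor M f with hlam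
  have lam_tmul : ∀ (f : A →ₗ[R] R) (w : A) (m : M), lam f (w ⊗ₜ m) = f w • m := by
    intro f w m; simp [hlam]
  -- forward map
  set η : M → {ψ : A →+ A ⊗[R] M //
      (∀ a x : A, ψ (a * x) = a • ψ x) ∧ (∀ a x : A, ψ (x * a) = op a • ψ x)} :=
    fun m => ⟨(((TensorProduct.mk R A M).flip m)).toAddMonoidHom,
      fun a x => by simp [TensorProduct.mk, smul_tmul'],
      fun a x => by
        show (x * a) ⊗ₜ[R] m = op a • (x ⊗ₜ[R] m)
        rw [smul_tmul', op_smul_eq_mul]⟩ with hη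
  -- key: any ψ in the subtype commutes with rTensor of any endomorphism
  have key : ∀ (ψ : {ψ : A →+ A ⊗[R] M //
      (∀ a x : A, ψ (a * x) = a • ψ x) ∧ (∀ a x : A, ψ (x * a) = op a • ψ x)})
      (f : A →ₗ[R] A) (x : A),
      (ψ : A →+ A ⊗[R] M) (f x) = LinearMap.rTensor M f ((ψ : A →+ A ⊗[R] M) x) := by
    rintro ⟨ψ, h1, h2⟩ f x
    obtain ⟨t, rfl⟩ := hA.bij.2 f
    induction t with
    | zero => simp
    | add t₁ t₂ ih₁ ih₂ =>
      simp only [map_add, LinearMap.add_apply, ih₁, ih₂, LinearMap.rTensor_add]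
    | tmul a b =>
      have hft : ∀ y : A, mulLeftRight R A (a ⊗ₜ b) y = a * y * b.unop := fun y => by
        simp [mulLeftRight, mul_assoc]
      simp only [hft]
      rw [show a * x * b.unop = (a * x) * b.unop from rfl, h2, h1]
      have hz : ∀ z : A ⊗[R] M,
          LinearMap.rTensor M (mulLeftRight R A (a ⊗ₜ b)) z = a • op b.unop • z := by
        intro z
        induction z with
        | zero => simp
        | add z₁ z₂ ih₁ ih₂ => simp [ih₁, ih₂]
        | tmul w m =>
          rw [LinearMap.rTensor_tmul, hft]
          rw [smul_tmul', smul_tmul', op_smul_eq_mul, smul_eq_mul, mul_assoc]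
      rw [hz]
      -- commute the two actions
      induction (ψ x) with
      | zero => simp
      | add z₁ z₂ ih₁ ih₂ => simp only [smul_add, ih₁, ih₂]
      | tmul w m =>
        rw [smul_tmul', smul_tmul', smul_tmul', smul_tmul', op_smul_eq_mul,
          op_smul_eq_mul, smul_eq_mul, smul_eq_mul, mul_assoc]
  -- the endomorphism θ_{f,x} : y ↦ f y • x
  have theta_lin : ∀ (f : A →ₗ[R] R) (x : A), ∃ θ : A →ₗ[R] A, ∀ y, θ y = f y • x := by
    intro f x
    exact ⟨{ toFun := fun y => f y • x,
             map_add' := fun y z => by simp [add_smul],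
             map_smul' := fun r y => by simp [smul_smul] }, fun y => rfl⟩
  choose θ hθ using theta_lin
  have rTensor_theta : ∀ (f : A →ₗ[R] R) (x : A) (z : A ⊗[R] M),
      LinearMap.rTensor M (θ f x) z = x ⊗ₜ lam f z := by
    intro f x z
    induction z with
    | zero => simp
    | add z₁ z₂ ih₁ ih₂ => simp [ih₁, ih₂, tmul_add]
    | tmul w m =>
      rw [LinearMap.rTensor_tmul, hθ, lam_tmul, smul_tmul]
  -- inverse map
  set σ : {ψ : A →+ A ⊗[R] M //
      (∀ a x : A, ψ (a * x) = a • ψ x) ∧ (∀ a x : A, ψ (x * a) = op a • ψ x)} → M :=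
    fun ψ => ∑ k, lam (φ k) ((ψ : A →+ A ⊗[R] M) (p k)) with hσ
  -- ψ x = x ⊗ σ ψ
  have main : ∀ ψ : {ψ : A →+ A ⊗[R] M //
      (∀ a x : A, ψ (a * x) = a • ψ x) ∧ (∀ a x : A, ψ (x * a) = op a • ψ x)},
      ∀ x : A, (ψ : A →+ A ⊗[R] M) x = x ⊗ₜ σ ψ := by
    intro ψ x
    have hx : x = ∑ k, θ (φ k) x (p k) := by
      simp only [hθ]
      rw [← Finset.sum_smul, hsum, one_smul]
    conv_lhs => rw [hx]
    rw [map_sum]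
    have : ∀ k, (ψ : A →+ A ⊗[R] M) (θ (φ k) x (p k)) =
        x ⊗ₜ lam (φ k) ((ψ : A →+ A ⊗[R] M) (p k)) := by
      intro k
      rw [key ψ (θ (φ k) x) (p k), rTensor_theta]
    simp only [this, hσ, tmul_sum]
  have left_inv : ∀ m : M, σ (η m) = m := by
    intro m
    simp only [hσ, hη]
    have : ∀ k, lam (φ k) ((((TensorProduct.mk R A M).flip m)).toAddMonoidHom (p k))
        = φ k (p k) • m := by
      intro k
      simp [TensorProduct.mk, lam_tmul]
    rw [Finset.sum_congr rfl fun k _ => this k, ← Finset.sum_smul, hsum, one_smul]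
  refine ⟨{ toFun := η, invFun := σ, left_inv := left_inv,
            right_inv := fun ψ => ?_ }, ?_, ?_, ?_⟩
  · ext x
    show (η (σ ψ) : A →+ A ⊗[R] M) x = (ψ : A →+ A ⊗[R] M) x
    rw [main ψ x]
    rfl
  · intro m a; rfl
  · intro m m'; funext a
    show a ⊗ₜ (m + m') = a ⊗ₜ m + a ⊗ₜ m'
    rw [tmul_add]
  · intro r m; funext a
    show a ⊗ₜ (r • m) = r • (a ⊗ₜ m)
    rw [tmul_smul]
end

section
/- Let R be a commutative ring, A an Azumaya algebra over R, and M an R-module. For every A-bimodule homomorphism ψ : A → A ⊗[R] M there exists a unique m ∈ M such that ψ(a) = a ⊗ m for all a ∈ A; equivalently, ψ = id_A ⊗ φ where φ : R → M is the R-linear map r ↦ r • m. -/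
open TensorProduct MulOpposite

section Aux

variable {R A M : Type*} [CommRing R] [Ring A] [Algebra R A]
  [AddCommGroup M] [Module R M]

lemma rTensor_mulLeft_apply (u : A) (w : A ⊗[R] M) :
    (LinearMap.mulLeft R u).rTensor M w = u • w := by
  induction w using TensorProduct.induction_on with
  | zero => simp
  | tmul x n => simp [TensorProduct.smul_tmul', smul_eq_mul]
  | add x y hx hy => simp [map_add, hx, hy, smul_add]

lemma rTensor_mulRight_apply (v : A) (w : A ⊗[R] M) :
    (LinearMap.mulRight R v).rTensor M w = op v • w := by
  induction w using TensorProduct.induction_on with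
  | zero => simp
  | tmul x n => simp [TensorProduct.smul_tmul', MulOpposite.smul_eq_mul_unop]
  | add x y hx hy => simp [map_add, hx, hy, smul_add]

lemma exists_unital_functional (R A : Type*) [CommRing R] [Ring A] [Algebra R A]
    [Module.Finite R A] [Module.Projective R A] [FaithfulSMul R A] :
    ∃ t : A →ₗ[R] R, t 1 = 1 := by
  obtain ⟨n, π, hπ⟩ := Module.Finite.exists_fin' R A
  obtain ⟨s, hs⟩ := Module.projective_lifting_property π LinearMap.id hπ
  let ev : (A →ₗ[R] R) →ₗ[R] R :=
    { toFun := fun t => t 1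
      map_add' := fun t₁ t₂ => rfl
      map_smul' := fun r t => rfl }
  set J : Ideal R := LinearMap.range ev with hJdef
  have hJ : (⊤ : Submodule R A) ≤ J • (⊤ : Submodule R A) := by
    intro x _
    have hx : x = ∑ i, (s x i) • π (Pi.single i 1) := by
      have h1 : π (s x) = x := by
        simpa using LinearMap.congr_fun hs x
      conv_lhs => rw [← h1]
      rw [← Finset.univ_sum_single (s x)]
      rw [map_sum]
      congr 1
      funext i
      rw [← map_smul]
      congr 1
      ext j
      by_cases h : i = j <;> simp [Pi.single_apply, h, mul_comm]
    rw [hx]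
    refine Submodule.sum_mem _ fun i _ => Submodule.smul_mem_smul ?_ trivial
    exact ⟨((LinearMap.proj i).comp s).comp (LinearMap.mulLeft R x), by simp [ev]⟩
  obtain ⟨r, hr1, hr2⟩ :=
    Submodule.exists_sub_one_mem_and_smul_eq_zero_of_fg_of_le_smul J ⊤
      (Module.Finite.fg_top (R := R) (M := A)) hJ
  have hr0 : r = 0 := by
    refine FaithfulSMul.eq_of_smul_eq_smul (α := A) fun a => ?_
    rw [zero_smul]
    exact hr2 a trivial
  have h1 : (1 : R) ∈ J := by
    rw [hr0] at hr1
    simpa using J.neg_mem hr1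
  obtain ⟨t, ht⟩ := h1
  exact ⟨t, ht⟩

end Aux

/-- Every `A`-bimodule homomorphism `ψ : A → A ⊗[R] M` (an additive map commuting with the
left and right `A`-actions) is of the form `a ↦ a ⊗ m` for a unique `m ∈ M`; equivalently
`ψ = id_A ⊗ φ` where `φ : R → M` is the `R`-linear map `r ↦ r • m`. -/
theorem stmt4 (R : Type*) [CommRing R] (A : Type*) [Ring A] [Algebra R A]
    (hA : IsAzumayaAlg R A) (M : Type*) [AddCommGroup M] [Module R M]
    (ψ : A →+ A ⊗[R] M)
    (hl : ∀ a x : A, ψ (a * x) = a • ψ x)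
    (hr : ∀ a x : A, ψ (x * a) = op a • ψ x) :
    ∃! m : M, ∀ a : A, ψ a = a ⊗ₜ[R] m := by
  haveI := hA.finite
  haveI := hA.projective
  haveI := hA.faithful
  obtain ⟨t, ht⟩ := exists_unital_functional R A
  set θ : A →ₗ[R] A := (Algebra.linearMap R A) ∘ₗ t with hθ
  obtain ⟨e, he⟩ := hA.bij.2 θ
  set z := ψ 1 with hzdef
  have hcent : ∀ a : A, op a • z = a • z := fun a => by
    rw [← hr a 1, ← hl a 1, one_mul, mul_one]
  have hψ : ∀ a : A, ψ a = a • z := fun a => by rw [← hl a 1, mul_one]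
  set m : M := TensorProduct.lid R M ((t.rTensor M) z) with hmdef
  have F2 : ∀ w : A ⊗[R] M,
      θ.rTensor M w = (1 : A) ⊗ₜ[R] (TensorProduct.lid R M ((t.rTensor M) w)) := by
    intro w
    induction w using TensorProduct.induction_on with
    | zero => simp
    | tmul x n =>
        simp only [hθ, LinearMap.rTensor_tmul, LinearMap.coe_comp, Function.comp_apply,
          Algebra.linearMap_apply, TensorProduct.lid_tmul, Algebra.algebraMap_eq_smul_one,
          TensorProduct.smul_tmul]
    | add a b ha hb => simp [map_add, ha, hb, tmul_add]
  have F1 : ∀ b : A ⊗[R] Aᵐᵒᵖ,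
      (mulLeftRight R A b).rTensor M z = ((mulLeftRight R A b) 1) • z := by
    intro b
    induction b using TensorProduct.induction_on with
    | zero => simp
    | tmul u v =>
        have h1 : mulLeftRight R A (u ⊗ₜ v)
            = (LinearMap.mulLeft R u).comp (LinearMap.mulRight R v.unop) := by
          simp [mulLeftRight]
        rw [h1, LinearMap.rTensor_comp, LinearMap.comp_apply, rTensor_mulRight_apply]
        rw [show op v.unop = v from op_unop v] at *
        rw [show (v : Aᵐᵒᵖ) • z = op v.unop • z by rw [op_unop], hcent v.unop,
          rTensor_mulLeft_apply]
        rw [smul_smul]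
        simp
    | add x y hx hy =>
        simp only [map_add, LinearMap.rTensor_add, LinearMap.add_apply, add_smul, hx, hy]
  have hθ1 : θ 1 = 1 := by simp [hθ, ht]
  have key : z = (1 : A) ⊗ₜ[R] m := by
    have h := F1 e
    rw [he, hθ1, one_smul] at h
    rw [← h, F2 z, hmdef]
  refine ⟨m, fun a => ?_, fun m' hm' => ?_⟩
  · rw [hψ a, key, TensorProduct.smul_tmul', smul_eq_mul, mul_one]
  · have h1 : z = (1 : A) ⊗ₜ[R] m' := hm' 1
    have : (1 : A) ⊗ₜ[R] m' = (1 : A) ⊗ₜ[R] m := by rw [← h1, key]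
    have h2 := congrArg (fun w => TensorProduct.lid R M ((t.rTensor M) w)) this
    simpa [ht] using h2
end

section
/- Let R be a commutative ring, A an Azumaya algebra over R, and M an R-module. There exists an isomorphism of A-bimodules A ≅ A ⊗[R] M if and only if M is isomorphic to R as an R-module. -/
open TensorProduct MulOpposite

section aux

variable {R : Type*} [CommRing R] {A : Type*} [Ring A] [Algebra R A]

theorem mulLeftRight_tmul' (a : A) (b : Aᵐᵒᵖ) (x : A) :
    mulLeftRight R A (a ⊗ₜ[R] b) x = a * x * b.unop := by
  simp [mulLeftRight, mul_assoc]

/-- A faithful finite projective module has "full trace ideal". -/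
theorem exists_trace_one (hfin : Module.Finite R A) (hproj : Module.Projective R A)
    (hfaith : FaithfulSMul R A) :
    ∃ (ι : Type) (_ : Fintype ι) (y : ι → A) (g : ι → (A →ₗ[R] R)),
      ∑ j, g j (y j) = 1 := by
  obtain ⟨n, F, G, -, -, hFG⟩ := Module.Finite.exists_comp_eq_id_of_projective R A
  set x : Fin n → A := fun i => F (Pi.single i 1) with hx
  set f : Fin n → (A →ₗ[R] R) := fun i => (LinearMap.proj i).comp G with hf
  have hdual : ∀ a : A, ∑ i, f i a • x i = a := by
    intro a
    have h2 : (∑ i, G a i • (Pi.single i 1 : Fin n → R)) = G a := by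
      ext k
      simp [Pi.single_apply]
    calc ∑ i, f i a • x i = F (∑ i, G a i • (Pi.single i 1 : Fin n → R)) := by
          rw [map_sum]; simp [hx, hf]
      _ = a := by rw [h2, ← LinearMap.comp_apply, hFG, LinearMap.id_apply]
  set τ : Ideal R := Ideal.span (Set.range fun p : Fin n × Fin n => f p.1 (x p.2)) with hτ
  have hmem : ∀ i a, f i a ∈ τ := by
    intro i a
    have h : f i a = ∑ j, f j a * f i (x j) := by
      conv_lhs => rw [← hdual a, map_sum]
      simp [smul_eq_mul, mul_comm]
    rw [h]
    exact Ideal.sum_mem _ fun j _ => Ideal.mul_mem_left _ _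
      (Ideal.subset_span ⟨(i, j), rfl⟩)
  have hle : τ ≤ τ • τ := by
    rw [hτ, Ideal.span_le]
    rintro - ⟨p, rfl⟩
    dsimp only
    rw [SetLike.mem_coe, smul_eq_mul]
    have h : f p.1 (x p.2) = ∑ k, f k (x p.2) * f p.1 (x k) := by
      conv_lhs => rw [← hdual (x p.2), map_sum]
      simp [smul_eq_mul, mul_comm]
    rw [h]
    exact Ideal.sum_mem _ fun k _ => Ideal.mul_mem_mul
      (Ideal.subset_span ⟨(k, p.2), rfl⟩) (Ideal.subset_span ⟨(p.1, k), rfl⟩)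
  have hfg : τ.FG := Submodule.fg_span (Set.finite_range _)
  obtain ⟨r, hrτ, hridem⟩ := Submodule.exists_mem_and_smul_eq_self_of_fg_of_le_smul τ τ hfg hle
  have hr1 : r = 1 := by
    have hz : ∀ a : A, (1 - r) • a = (0:R) • a := by
      intro a
      have hfz : ∀ i, f i ((1 - r) • a) = 0 := by
        intro i
        have h' : r * f i a = f i a := by
          have := hridem _ (hmem i a); rwa [smul_eq_mul] at this
        rw [map_smul, smul_eq_mul, sub_mul, one_mul, h', sub_self]
      rw [zero_smul, ← hdual ((1-r) • a)]
      simp [hfz]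
    have h0 := hfaith.eq_of_smul_eq_smul hz
    exact (sub_eq_zero.mp h0).symm
  subst hr1
  have h1τ : (1:R) ∈ τ := hrτ
  rw [hτ] at h1τ
  obtain ⟨c, hc⟩ := (Submodule.mem_span_range_iff_exists_fun R).mp h1τ
  exact ⟨Fin n × Fin n, inferInstance, fun p => x p.2, fun p => c p • f p.1, by
    simpa [smul_eq_mul] using hc⟩

end aux

/-- There is an isomorphism of `A`-bimodules `A ≅ A ⊗[R] M` (an additive equivalence commuting
with both the left and right `A`-actions) if and only if `M ≅ R` as `R`-modules. -/
theorem stmt7 (R : Type*) [CommRing R] (A : Type*) [Ring A] [Algebra R A]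
    (hA : IsAzumayaAlg R A) (M : Type*) [AddCommGroup M] [Module R M] :
    (∃ ψ : A ≃+ A ⊗[R] M, (∀ a x : A, ψ (a * x) = a • ψ x) ∧
        (∀ a x : A, ψ (x * a) = op a • ψ x)) ↔ Nonempty (M ≃ₗ[R] R) := by
  constructor
  · rintro ⟨ψ, hl, hr⟩
    obtain ⟨ι, _, y, g, hg1⟩ := exists_trace_one hA.finite hA.projective hA.faithful
    have hbij := hA.bij
    set τ₀ : A →ₗ[R] R := ∑ j, (g j) ∘ₗ (LinearMap.mulRight R (y j)) with hτ₀
    have hτ₀app : ∀ z, τ₀ z = ∑ j, g j (z * y j) := by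
      intro z; simp [hτ₀, LinearMap.sum_apply]
    have hτ₀1 : τ₀ (1:A) = 1 := by rw [hτ₀app]; simpa using hg1
    -- every central element of `A` is `τ₀ z • 1`
    have hcentral : ∀ z : A, (∀ a : A, a * z = z * a) → z = τ₀ z • 1 := by
      intro z hz
      have hcommE : ∀ (F : A →ₗ[R] A) (w : A), z * F w = F (z * w) := by
        intro F w
        obtain ⟨u, rfl⟩ := hbij.2 F
        induction u using TensorProduct.induction_on with
        | zero => simp
        | tmul c d =>
          rw [mulLeftRight_tmul', mulLeftRight_tmul']
          simp only [← mul_assoc]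
          rw [← hz c]
        | add u v hu hv =>
          simp only [map_add, LinearMap.add_apply, mul_add] at hu hv ⊢
          rw [hu, hv]
      have key : ∀ (φ : A →ₗ[R] R) (w v : A), φ w • (z * v) = φ (z * w) • v := by
        intro φ w v
        have h := hcommE (φ.smulRight v) w
        simpa [LinearMap.smulRight_apply, mul_smul_comm] using h
      calc z = ∑ j, g j (y j) • (z * 1) := by
            rw [mul_one, ← Finset.sum_smul, hg1, one_smul]
        _ = ∑ j, g j (z * y j) • 1 := Finset.sum_congr rfl fun j _ => key (g j) (y j) 1
        _ = τ₀ z • 1 := by rw [← Finset.sum_smul, hτ₀app]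
    -- the separability idempotent
    set E := LinearEquiv.ofBijective _ hbij with hE
    set F₀ : A →ₗ[R] A := τ₀.smulRight 1 with hF₀
    set e : A ⊗[R] Aᵐᵒᵖ := E.symm F₀ with he
    have hme : mulLeftRight R A e = F₀ := E.apply_symm_apply F₀
    obtain ⟨s, hs⟩ := TensorProduct.exists_finset e
    have happ : ∀ a : A, ∑ p ∈ s, p.1 * a * p.2.unop = τ₀ a • 1 := by
      intro a
      have h : (mulLeftRight R A e) a = τ₀ a • 1 := by rw [hme]; simp [hF₀]
      rw [hs] at h
      simpa [map_sum, LinearMap.sum_apply, mulLeftRight_tmul'] using h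
    have hsum1 : ∑ p ∈ s, p.1 * p.2.unop = 1 := by
      have h := happ 1
      simpa [hτ₀1] using h
    -- central elements of `A ⊗ M` lie in `1 ⊗ M`
    have hproj : ∀ x : A ⊗[R] M, (∀ a : A, a • x = op a • x) →
        ∃ m : M, x = (1:A) ⊗ₜ[R] m := by
      intro x hx
      have hPx : ∑ p ∈ s, p.1 • ((p.2 : Aᵐᵒᵖ) • x) = x := by
        have h1 : ∀ p : A × Aᵐᵒᵖ, p.1 • (p.2 • x) = (p.1 * p.2.unop) • x := by
          intro p
          have h2 : (p.2 : Aᵐᵒᵖ) • x = p.2.unop • x := by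
            conv_lhs => rw [← op_unop p.2, ← hx p.2.unop]
          rw [h2, smul_smul]
        rw [Finset.sum_congr rfl fun p _ => h1 p, ← Finset.sum_smul, hsum1, one_smul]
      have hPmem : ∀ z : A ⊗[R] M,
          ∃ m : M, (1:A) ⊗ₜ[R] m = ∑ p ∈ s, p.1 • ((p.2 : Aᵐᵒᵖ) • z) := by
        intro z
        induction z using TensorProduct.induction_on with
        | zero => exact ⟨0, by simp⟩
        | tmul a m =>
          refine ⟨τ₀ a • m, ?_⟩
          have h1 : ∀ p : A × Aᵐᵒᵖ, p.1 • ((p.2 : Aᵐᵒᵖ) • (a ⊗ₜ[R] m))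
              = (p.1 * (a * p.2.unop)) ⊗ₜ[R] m := by
            intro p
            rw [TensorProduct.smul_tmul', TensorProduct.smul_tmul',
              MulOpposite.smul_eq_mul_unop, smul_eq_mul]
          rw [Finset.sum_congr rfl fun p _ => h1 p]
          simp_rw [← mul_assoc]
          rw [← TensorProduct.sum_tmul, happ a, TensorProduct.smul_tmul]
        | add u v hu hv =>
          obtain ⟨mu, hmu⟩ := hu
          obtain ⟨mv, hmv⟩ := hv
          refine ⟨mu + mv, ?_⟩
          simp only [smul_add, Finset.sum_add_distrib, tmul_add]
          rw [hmu, hmv]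
      obtain ⟨m, hm⟩ := hPmem x
      exact ⟨m, (hm.trans hPx).symm⟩
    -- the retraction `ρ : A ⊗ M → M`
    set ρ : A ⊗[R] M →ₗ[R] M :=
      (TensorProduct.lid R M).toLinearMap ∘ₗ (TensorProduct.map τ₀ LinearMap.id) with hρ
    have hρ1 : ∀ m : M, ρ ((1:A) ⊗ₜ[R] m) = m := by
      intro m; simp [hρ, hτ₀1]
    -- `ψ` and `ψ.symm` are `R`-linear
    have hψR : ∀ (r : R) (a : A), ψ (r • a) = r • ψ a := by
      intro r a
      rw [Algebra.smul_def, hl, algebraMap_smul]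
    have hψsR : ∀ (r : R) (v : A ⊗[R] M), ψ.symm (r • v) = r • ψ.symm v := by
      intro r v
      apply ψ.injective
      rw [hψR, ψ.apply_symm_apply, ψ.apply_symm_apply]
    -- elements `ψ.symm (1 ⊗ m)` are central
    have hzc : ∀ (m : M) (a : A),
        a * ψ.symm ((1:A) ⊗ₜ[R] m) = ψ.symm ((1:A) ⊗ₜ[R] m) * a := by
      intro m a
      apply ψ.injective
      rw [hl, hr, ψ.apply_symm_apply, TensorProduct.smul_tmul', TensorProduct.smul_tmul',
        MulOpposite.smul_eq_mul_unop, unop_op, smul_eq_mul, mul_one, one_mul]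
    set w := ψ 1 with hwdef
    have hwc : ∀ a : A, a • w = op a • w := by
      intro a; rw [hwdef, ← hl, ← hr, mul_one, one_mul]
    obtain ⟨m₀, hm₀⟩ := hproj w hwc
    set φf : M → R := fun m => τ₀ (ψ.symm ((1:A) ⊗ₜ[R] m)) with hφf
    have hkey1 : ∀ m, ψ.symm ((1:A) ⊗ₜ[R] m) = φf m • 1 := fun m => hcentral _ (hzc m)
    have hkey2 : ∀ m, m = φf m • m₀ := by
      intro m
      have h1 : (1:A) ⊗ₜ[R] m = φf m • ((1:A) ⊗ₜ[R] m₀) := by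
        conv_lhs => rw [← ψ.apply_symm_apply ((1:A) ⊗ₜ[R] m), hkey1 m]
        rw [hψR, ← hwdef, hm₀]
      have h2 := congrArg ρ h1
      rw [hρ1, map_smul, hρ1] at h2
      exact h2
    have hφadd : ∀ m m', φf (m + m') = φf m + φf m' := by
      intro m m'
      rw [hφf]; dsimp only
      rw [tmul_add, map_add, map_add]
    have hφsmul : ∀ (r : R) (m : M), φf (r • m) = r * φf m := by
      intro r m
      rw [hφf]; dsimp only
      rw [tmul_smul, hψsR, map_smul, smul_eq_mul]
    have hfm₀ : φf m₀ = 1 := by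
      rw [hφf]; dsimp only
      rw [← hm₀, hwdef, ψ.symm_apply_apply, hτ₀1]
    exact ⟨⟨⟨⟨φf, fun m m' => hφadd m m'⟩,
      fun r m => by show φf (r • m) = r • φf m; rw [hφsmul, smul_eq_mul]⟩,
      fun r => r • m₀,
      fun m => (hkey2 m).symm,
      fun r => by show φf (r • m₀) = r; rw [hφsmul, hfm₀, mul_one]⟩⟩
  · rintro ⟨eM⟩
    set L : A ≃ₗ[R] A ⊗[R] M :=
      (TensorProduct.rid R A).symm ≪≫ₗ TensorProduct.congr (LinearEquiv.refl R A) eM.symm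
      with hLdef
    have hL : ∀ a : A, L a = a ⊗ₜ[R] eM.symm 1 := by
      intro a
      simp [hLdef, TensorProduct.rid_symm_apply, TensorProduct.congr_tmul]
    refine ⟨L.toAddEquiv, fun a x => ?_, fun a x => ?_⟩
    · show L (a * x) = a • L x
      rw [hL, hL, TensorProduct.smul_tmul', smul_eq_mul]
    · show L (x * a) = op a • L x
      rw [hL, hL, TensorProduct.smul_tmul', MulOpposite.smul_eq_mul_unop, unop_op]
end

section
/- Let R be a commutative ring, A an Azumaya algebra over R, and M an R-module. The functor T_M = (- ⊗[R] M) on the category of right A-modules is naturally isomorphic to the identity functor if and only if M is isomorphic to R as an R-module. -/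
open TensorProduct MulOpposite

universe u

/-- A finitely generated projective faithful module over a commutative ring has a finite
dual basis together with a "generator" family witnessing that the trace ideal is everything. -/
theorem aux_dualBasis (R A : Type u) [CommRing R] [AddCommGroup A] [Module R A]
    [Module.Finite R A] [Module.Projective R A] [FaithfulSMul R A] :
    ∃ (n : ℕ) (a : Fin n → A) (f : Fin n → (A →ₗ[R] R)) (c : Fin n → A),
      (∀ x : A, ∑ i, f i x • a i = x) ∧ ∑ i, f i (c i) = 1 := by
  obtain ⟨n, π, hπ⟩ := Module.Finite.exists_fin' R A
  obtain ⟨s, hs⟩ := Module.projective_lifting_property π LinearMap.id hπ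
  have hs' : ∀ x : A, π (s x) = x := fun x => congrArg (fun g => g x) hs
  set a : Fin n → A := fun i => π (Pi.single i 1) with ha
  set f : Fin n → (A →ₗ[R] R) := fun i => (LinearMap.proj i).comp s with hf
  have hdb : ∀ x : A, ∑ i, f i x • a i = x := by
    intro x
    have h1 : ∑ i, f i x • a i = π (∑ i, s x i • (Pi.single i 1 : Fin n → R)) := by
      rw [map_sum]
      refine Finset.sum_congr rfl fun i _ => ?_
      rw [ha, hf]
      simp [LinearMap.map_smul]
    have h2 : (∑ i, s x i • (Pi.single i 1 : Fin n → R)) = s x := by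
      funext j
      simp [Pi.single_apply, Finset.sum_ite_eq']
    rw [h1, h2, hs']
  -- generator
  set F : (Fin n → A) →ₗ[R] R := ∑ i, (f i).comp (LinearMap.proj i) with hF
  have hFapp : ∀ v, F v = ∑ i, f i (v i) := by intro v; simp [hF]
  have hle : (⊤ : Submodule R A) ≤ (LinearMap.range F) • (⊤ : Submodule R A) := by
    intro x _
    rw [← hdb x]
    refine Submodule.sum_mem _ fun i _ => ?_
    refine Submodule.smul_mem_smul ⟨Pi.single i x, ?_⟩ trivial
    rw [hFapp]
    rw [Finset.sum_eq_single i (fun j _ hj => by simp [Pi.single_eq_of_ne hj]) (by simp)]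
    simp
  obtain ⟨r, hr1, hr2⟩ :=
    Submodule.exists_sub_one_mem_and_smul_eq_zero_of_fg_of_le_smul (LinearMap.range F) ⊤
      (Module.Finite.fg_top) hle
  have hr0 : r = 0 := by
    refine FaithfulSMul.eq_of_smul_eq_smul (fun m : A => ?_)
    rw [hr2 m trivial, zero_smul]
  rw [hr0, zero_sub] at hr1
  obtain ⟨v, hv⟩ := Submodule.neg_mem _ hr1
  rw [neg_neg] at hv
  exact ⟨n, a, f, v, hdb, by rw [← hFapp, hv]⟩

/-- If `M ≃ R`, then for any right `A`-module `N` we get a natural `Aᵐᵒᵖ`-linear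
equivalence `N ≃ N ⊗[R] M`, sending `n` to `n ⊗ e.symm 1`. -/
noncomputable def epsAux (R : Type u) [CommRing R] (A : Type u) [Ring A] [Algebra R A]
    (M : Type u) [AddCommGroup M] [Module R M] (e : M ≃ₗ[R] R)
    (N : Type u) [AddCommGroup N] [Module R N] [Module Aᵐᵒᵖ N] [IsScalarTower R Aᵐᵒᵖ N] :
    N ≃ₗ[Aᵐᵒᵖ] N ⊗[R] M := by
  refine LinearEquiv.ofLinear
    { toFun := fun n => n ⊗ₜ[R] e.symm 1
      map_add' := fun n₁ n₂ => add_tmul _ _ _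
      map_smul' := fun a n => (TensorProduct.smul_tmul' a n (e.symm 1)).symm }
    { toFun := TensorProduct.lift ((LinearMap.lsmul R N ∘ₗ e.toLinearMap).flip)
      map_add' := map_add _
      map_smul' := fun a y => ?_ } ?_ ?_
  · simp only [RingHom.id_apply]
    induction y using TensorProduct.induction_on with
    | zero => simp
    | tmul n m =>
        simp only [TensorProduct.smul_tmul', TensorProduct.lift.tmul,
          LinearMap.flip_apply, LinearMap.comp_apply, LinearEquiv.coe_coe,
          LinearMap.lsmul_apply]
        exact smul_comm _ _ _
    | add y₁ y₂ h₁ h₂ => rw [smul_add, map_add, h₁, h₂, map_add, smul_add]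
  · refine LinearMap.ext fun y => ?_
    simp only [LinearMap.coe_comp, LinearMap.coe_mk, AddHom.coe_mk, Function.comp_apply,
      LinearMap.id_apply]
    induction y using TensorProduct.induction_on with
    | zero => simp
    | tmul n m =>
        simp only [TensorProduct.lift.tmul, LinearMap.flip_apply, LinearMap.comp_apply,
          LinearEquiv.coe_coe, LinearMap.lsmul_apply]
        rw [TensorProduct.smul_tmul, ← map_smul, smul_eq_mul, mul_one, e.symm_apply_apply]
    | add y₁ y₂ h₁ h₂ => rw [map_add, add_tmul, h₁, h₂]
  · refine LinearMap.ext fun n => ?_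
    simp only [LinearMap.coe_comp, LinearMap.coe_mk, AddHom.coe_mk, Function.comp_apply,
      TensorProduct.lift.tmul, LinearMap.flip_apply, LinearMap.comp_apply,
      LinearEquiv.coe_coe, LinearMap.lsmul_apply, LinearMap.id_apply]
    rw [e.apply_symm_apply, one_smul]

theorem epsAux_apply (R : Type u) [CommRing R] (A : Type u) [Ring A] [Algebra R A]
    (M : Type u) [AddCommGroup M] [Module R M] (e : M ≃ₗ[R] R)
    (N : Type u) [AddCommGroup N] [Module R N] [Module Aᵐᵒᵖ N] [IsScalarTower R Aᵐᵒᵖ N]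
    (n : N) : epsAux R A M e N n = n ⊗ₜ[R] e.symm 1 := rfl

/-- The functor `T_M = - ⊗[R] M` on the category of right `A`-modules (formalized as
`Aᵐᵒᵖ`-modules whose `R`-action factors through `Aᵐᵒᵖ`) is naturally isomorphic to the
identity functor if and only if `M ≅ R` as `R`-modules. -/
theorem stmt9 (R : Type u) [CommRing R] (A : Type u) [Ring A] [Algebra R A]
    (hA : IsAzumayaAlg R A) (M : Type u) [AddCommGroup M] [Module R M] :
    (∃ ε : ∀ (N : Type u) [AddCommGroup N] [Module R N] [Module Aᵐᵒᵖ N]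
        [IsScalarTower R Aᵐᵒᵖ N], N ≃ₗ[Aᵐᵒᵖ] N ⊗[R] M,
      ∀ (N : Type u) [AddCommGroup N] [Module R N] [Module Aᵐᵒᵖ N] [IsScalarTower R Aᵐᵒᵖ N]
        (N' : Type u) [AddCommGroup N'] [Module R N'] [Module Aᵐᵒᵖ N']
        [IsScalarTower R Aᵐᵒᵖ N'] (f : N →ₗ[Aᵐᵒᵖ] N') (n : N),
        ε N' (f n) = LinearMap.rTensor M (f.restrictScalars R) (ε N n)) ↔
    Nonempty (M ≃ₗ[R] R) := by
  constructor
  · rintro ⟨ε, hnat⟩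
    have hfin : Module.Finite R A := hA.finite
    have hproj : Module.Projective R A := hA.projective
    have hfaith : FaithfulSMul R A := hA.faithful
    obtain ⟨n, a, f, c, hdb, hgen⟩ := aux_dualBasis R A
    set q := ε A with hqdef
    -- `q` is `R`-linear
    have hqR : ∀ (r : R) (x : A), q (r • x) = r • q x := by
      intro r x
      rw [← algebraMap_smul Aᵐᵒᵖ r x, map_smul, algebraMap_smul]
    -- `q` commutes with every `R`-linear endomorphism of `A`
    have hmlr : ∀ (a' : A) (b : Aᵐᵒᵖ), mulLeftRight R A (a' ⊗ₜ[R] b)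
        = (LinearMap.mulLeft R a').comp (LinearMap.mulRight R b.unop) := by
      intro a' b; simp [mulLeftRight]
    have hcomm : ∀ (t : A ⊗[R] Aᵐᵒᵖ) (x : A),
        q (mulLeftRight R A t x) = (mulLeftRight R A t).rTensor M (q x) := by
      intro t
      induction t using TensorProduct.induction_on with
      | zero => intro x; simp
      | tmul a' b =>
          intro x
          -- left multiplication by `a'` is a right `A`-module map
          set La : A →ₗ[Aᵐᵒᵖ] A :=
            { toFun := fun y => a' * y
              map_add' := fun y₁ y₂ => mul_add a' y₁ y₂
              map_smul' := fun b' y => by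
                simp only [MulOpposite.smul_eq_mul_unop, RingHom.id_apply, mul_assoc] } with hLa
          have hL : q (a' * x) = (La.restrictScalars R).rTensor M (q x) := hnat A A La x
          have hres : (La.restrictScalars R) = LinearMap.mulLeft R a' := by
            ext y; simp [hLa]
          rw [hres] at hL
          have hval : mulLeftRight R A (a' ⊗ₜ[R] b) x = b • (a' * x) := by
            rw [hmlr]
            simp [MulOpposite.smul_eq_mul_unop, mul_assoc]
          rw [hval, map_smul, hL]
          -- move the `b`-action through `rTensor`
          induction (q x) using TensorProduct.induction_on with
          | zero => simp
          | tmul cc m =>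
              rw [LinearMap.rTensor_tmul, LinearMap.rTensor_tmul, hmlr]
              rw [TensorProduct.smul_tmul']
              simp [MulOpposite.smul_eq_mul_unop, mul_assoc]
          | add y₁ y₂ h₁ h₂ => rw [map_add, smul_add, h₁, h₂, map_add]
      | add t₁ t₂ h₁ h₂ =>
          intro x
          rw [map_add, LinearMap.add_apply, map_add, h₁, h₂, LinearMap.rTensor_add,
            LinearMap.add_apply]
    have hcommE : ∀ (φ : A →ₗ[R] A) (x : A), q (φ x) = φ.rTensor M (q x) := by
      intro φ x
      obtain ⟨t, rfl⟩ := hA.bij.2 φ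
      exact hcomm t x
    -- the contraction maps
    set κ : (A →ₗ[R] R) → (A ⊗[R] M →ₗ[R] M) :=
      fun g => TensorProduct.lift ((LinearMap.lsmul R M).comp g) with hκ
    have hκapp : ∀ g (a' : A) (m : M), κ g (a' ⊗ₜ[R] m) = g a' • m := by
      intro g a' m; simp [hκ]
    -- the key relation
    have hrel : ∀ (g : A →ₗ[R] R) (x a' : A), g x • q a' = a' ⊗ₜ[R] (κ g (q x)) := by
      intro g x a'
      have h1 := hcommE (g.smulRight a') x
      rw [LinearMap.smulRight_apply, hqR] at h1
      rw [h1]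
      induction (q x) using TensorProduct.induction_on with
      | zero => simp
      | tmul cc m =>
          rw [LinearMap.rTensor_tmul, LinearMap.smulRight_apply, hκapp,
            TensorProduct.smul_tmul]
      | add y₁ y₂ h₁ h₂ => rw [map_add, map_add, h₁, h₂, TensorProduct.tmul_add]
    set m₀ : M := ∑ i, κ (f i) (q (c i)) with hm₀
    have hq1 : ∀ x : A, q x = x ⊗ₜ[R] m₀ := by
      intro x
      have h1 : q x = ∑ i, f i (c i) • q x := by
        rw [← Finset.sum_smul, hgen, one_smul]
      rw [h1]
      rw [hm₀, TensorProduct.tmul_sum]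
      exact Finset.sum_congr rfl fun i _ => hrel (f i) (c i) x
    set ρ : R →ₗ[R] M := LinearMap.toSpanSingleton R M m₀ with hρ
    have hρapp : ∀ r, ρ r = r • m₀ := fun r => rfl
    have hinj : Function.Injective ρ := by
      refine (injective_iff_map_eq_zero ρ).mpr fun r hr => ?_
      rw [hρapp] at hr
      have h1 : q (r • (1 : A)) = 0 := by
        rw [hqR, hq1 1, ← TensorProduct.tmul_smul, hr, TensorProduct.tmul_zero]
      have h2 : r • (1 : A) = 0 := by
        apply q.injective
        rw [h1, map_zero]
      refine FaithfulSMul.eq_of_smul_eq_smul fun y : A => ?_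
      rw [zero_smul]
      calc r • y = (r • (1 : A)) * y := by rw [smul_mul_assoc, one_mul]
        _ = 0 := by rw [h2, zero_mul]
    have hsurj : Function.Surjective ρ := by
      intro m
      set d : Fin n → A := fun i => q.symm (c i ⊗ₜ[R] m) with hd
      have hdi : ∀ i, q (d i) = c i ⊗ₜ[R] m := fun i => q.apply_symm_apply _
      have key : ∀ i, f i (c i) • m = f i (d i) • m₀ := by
        intro i
        have h3 : (c i ⊗ₜ[R] m : A ⊗[R] M) = d i ⊗ₜ[R] m₀ := by
          rw [← hdi i, hq1]
        have h4 := congrArg (κ (f i)) h3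
        rwa [hκapp, hκapp] at h4
      refine ⟨∑ i, f i (d i), ?_⟩
      rw [hρapp, Finset.sum_smul]
      calc (∑ i, f i (d i) • m₀) = ∑ i, f i (c i) • m := by
            exact Finset.sum_congr rfl fun i _ => (key i).symm
        _ = (∑ i, f i (c i)) • m := by rw [Finset.sum_smul]
        _ = m := by rw [hgen, one_smul]
    exact ⟨(LinearEquiv.ofBijective ρ ⟨hinj, hsurj⟩).symm⟩
  · rintro ⟨e⟩
    refine ⟨fun N _ _ _ _ => epsAux R A M e N, ?_⟩
    intro N _ _ _ _ N' _ _ _ _ f n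
    rw [epsAux_apply, epsAux_apply, LinearMap.rTensor_tmul]
    rfl
end

section
/- Let R be a Noetherian commutative ring, A an Azumaya algebra over R, and M a finitely generated R-module. The functor T_M = (- ⊗[R] M) on the category of finitely generated right A-modules is naturally isomorphic to the identity functor if and only if M is isomorphic to R as an R-module. -/
open TensorProduct MulOpposite

/-- `A` is an Azumaya algebra over the commutative ring `R`: it is a faithful finitely
generated projective `R`-module and `A ⊗[R] Aᵐᵒᵖ → End_R(A)`, `a ⊗ b ↦ (x ↦ a·x·b)`,
is bijective. -/
structure IsAzumaya' (R A : Type*) [CommRing R] [Ring A] [Algebra R A] : Prop where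
  finite : Module.Finite R A
  projective : Module.Projective R A
  faithful : FaithfulSMul R A
  bij : Function.Bijective (mulLeftRight R A)

universe u

section Aux

/-- For a f.g. projective faithful module over a commutative ring, the trace ideal is the whole
ring: there exist finitely many functionals and elements pairing to `1`. -/
theorem exists_dual_one (R : Type*) [CommRing R] (P : Type*) [AddCommGroup P] [Module R P]
    [Module.Finite R P] [Module.Projective R P] [FaithfulSMul R P] :
    ∃ (n : ℕ) (ψ : Fin n → (P →ₗ[R] R)) (b : Fin n → P), ∑ i, ψ i (b i) = 1 := by
  obtain ⟨n, x, hx⟩ := Module.Finite.exists_fin (M := P) (R := R)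
  set π : (Fin n → R) →ₗ[R] P := Fintype.linearCombination R x with hπ
  have hπsurj : Function.Surjective π := by
    rw [← LinearMap.range_eq_top, Fintype.range_linearCombination, hx]
  obtain ⟨s, hs⟩ := Module.projective_lifting_property π LinearMap.id hπsurj
  set ψ : Fin n → (P →ₗ[R] R) := fun i => (LinearMap.proj i).comp s with hψ
  have hdual : ∀ p : P, ∑ i, ψ i p • x i = p := by
    intro p
    have := congrArg (fun f => f p) hs
    simpa [π, Fintype.linearCombination_apply, ψ] using this
  set I : Ideal R := Ideal.span (Set.range fun q : Fin n × Fin n => ψ q.1 (x q.2)) with hI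
  have hIP : (⊤ : Submodule R P) ≤ I • ⊤ := by
    intro p _
    rw [← hdual p]
    refine Submodule.sum_mem _ fun i _ => Submodule.smul_mem_smul ?_ trivial
    · rw [← hdual p, map_sum]
      refine Ideal.sum_mem _ fun j _ => ?_
      rw [map_smul]
      exact Ideal.mul_mem_left _ _ (Ideal.subset_span ⟨(i, j), rfl⟩)
  obtain ⟨r, hr1, hr2⟩ := Submodule.exists_sub_one_mem_and_smul_eq_zero_of_fg_of_le_smul I ⊤
    (Module.Finite.fg_top) hIP
  have hr0 : r = 0 := by
    have : ∀ p : P, r • p = (0 : R) • p := fun p => by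
      rw [hr2 p trivial, zero_smul]
    exact eq_of_smul_eq_smul this
  have h1 : (1 : R) ∈ I := by
    have : r - 1 ∈ I := hr1
    rw [hr0, zero_sub] at this
    simpa using I.neg_mem this
  obtain ⟨c, hc⟩ := (Submodule.mem_span_range_iff_exists_fun R).mp h1
  refine ⟨n * n, fun k => c (finProdFinEquiv.symm k) • ψ (finProdFinEquiv.symm k).1,
    fun k => x (finProdFinEquiv.symm k).2, ?_⟩
  rw [← hc, ← Equiv.sum_comp finProdFinEquiv.symm
    (fun q : Fin n × Fin n => c q • (ψ q.1) (x q.2))]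
  simp [smul_eq_mul]

variable {R B M : Type*} [CommRing R] [Ring B] [Algebra R B]
  [AddCommGroup M] [Module R M]

theorem smul_eq_rTensor_mulLeft (c : B) (w : B ⊗[R] M) :
    c • w = LinearMap.rTensor M (LinearMap.mulLeft R c) w := by
  induction w using TensorProduct.induction_on with
  | zero => simp
  | tmul x m => rw [TensorProduct.smul_tmul']; simp [smul_eq_mul]
  | add x y hx hy => rw [smul_add, map_add, hx, hy]

/-- Contraction of a tensor along a functional. -/
noncomputable def contr (ψ : B →ₗ[R] R) : B ⊗[R] M →ₗ[R] M :=
  TensorProduct.lift ((LinearMap.lsmul R M).comp ψ)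

@[simp] theorem contr_tmul (ψ : B →ₗ[R] R) (b : B) (m : M) :
    contr ψ (b ⊗ₜ[R] m) = ψ b • m := rfl

theorem rTensor_smulRight (ψ : B →ₗ[R] R) (x : B) (w : B ⊗[R] M) :
    LinearMap.rTensor M (ψ.smulRight x) w = x ⊗ₜ[R] contr ψ w := by
  induction w using TensorProduct.induction_on with
  | zero => simp
  | tmul y m => simp [TensorProduct.smul_tmul, TensorProduct.tmul_smul]
  | add y z hy hz => rw [map_add, map_add, hy, hz, TensorProduct.tmul_add]


/-- If `M ≃ R`, tensoring on the right with `M` is naturally isomorphic to the identity. -/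
noncomputable def tmulRightEquiv (R B N M : Type*) [CommRing R] [Ring B] [Algebra R B]
    [AddCommGroup N] [Module R N] [Module B N] [IsScalarTower R B N]
    [AddCommGroup M] [Module R M] (e : M ≃ₗ[R] R) : N ≃ₗ[B] N ⊗[R] M := by
  refine LinearEquiv.ofBijective
    ({ toFun := fun x => x ⊗ₜ[R] e.symm 1
       map_add' := fun x y => TensorProduct.add_tmul x y (e.symm 1)
       map_smul' := fun c x => (TensorProduct.smul_tmul' c x (e.symm 1)).symm } :
      N →ₗ[B] N ⊗[R] M) ?_
  have h : (fun x : N => x ⊗ₜ[R] e.symm 1) =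
      ⇑((TensorProduct.congr (LinearEquiv.refl R N) e.symm).toLinearMap ∘ₗ
        (TensorProduct.rid R N).symm.toLinearMap) := by
    funext x
    simp [TensorProduct.congr_tmul]
  show Function.Bijective (fun x : N => x ⊗ₜ[R] e.symm 1)
  rw [h, LinearMap.coe_comp, LinearEquiv.coe_coe, LinearEquiv.coe_coe]
  exact (TensorProduct.congr (LinearEquiv.refl R N) e.symm).bijective.comp
    (TensorProduct.rid R N).symm.bijective

@[simp] theorem tmulRightEquiv_apply (R B N M : Type*) [CommRing R] [Ring B] [Algebra R B]
    [AddCommGroup N] [Module R N] [Module B N] [IsScalarTower R B N]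
    [AddCommGroup M] [Module R M] (e : M ≃ₗ[R] R) (x : N) :
    tmulRightEquiv R B N M e x = x ⊗ₜ[R] e.symm 1 := rfl

end Aux

/-- Let `R` be Noetherian and `M` a finitely generated `R`-module. The functor
`T_M = - ⊗[R] M` on the category of finitely generated right `A`-modules (formalized as
finitely generated `Aᵐᵒᵖ`-modules whose `R`-action factors through `Aᵐᵒᵖ`) is naturally
isomorphic to the identity functor if and only if `M ≅ R` as `R`-modules. -/
theorem stmt10 (R : Type u) [CommRing R] [IsNoetherianRing R]
    (A : Type u) [Ring A] [Algebra R A] (hA : IsAzumaya' R A)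
    (M : Type u) [AddCommGroup M] [Module R M] [Module.Finite R M] :
    (∃ ε : ∀ (N : Type u) [AddCommGroup N] [Module R N] [Module Aᵐᵒᵖ N]
        [IsScalarTower R Aᵐᵒᵖ N] [Module.Finite Aᵐᵒᵖ N], N ≃ₗ[Aᵐᵒᵖ] N ⊗[R] M,
      ∀ (N : Type u) [AddCommGroup N] [Module R N] [Module Aᵐᵒᵖ N] [IsScalarTower R Aᵐᵒᵖ N]
        [Module.Finite Aᵐᵒᵖ N]
        (N' : Type u) [AddCommGroup N'] [Module R N'] [Module Aᵐᵒᵖ N']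
        [IsScalarTower R Aᵐᵒᵖ N'] [Module.Finite Aᵐᵒᵖ N']
        (f : N →ₗ[Aᵐᵒᵖ] N') (n : N),
        ε N' (f n) = LinearMap.rTensor M (f.restrictScalars R) (ε N n)) ↔
    Nonempty (M ≃ₗ[R] R) := by
  haveI := hA.finite
  haveI := hA.projective
  haveI := hA.faithful
  haveI : Module.Finite R Aᵐᵒᵖ := Module.Finite.equiv (MulOpposite.opLinearEquiv R)
  haveI : Module.Projective R Aᵐᵒᵖ := Module.Projective.of_equiv (MulOpposite.opLinearEquiv R)
  haveI : FaithfulSMul R Aᵐᵒᵖ := by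
    constructor
    intro r s h
    refine eq_of_smul_eq_smul (M := R) (α := A) fun a => ?_
    have := h (op a)
    rw [← unop_inj] at this
    simpa using this
  constructor
  · rintro ⟨ε, hnat⟩
    -- the natural isomorphism at `Aᵐᵒᵖ` itself
    set E : Aᵐᵒᵖ ≃ₗ[Aᵐᵒᵖ] Aᵐᵒᵖ ⊗[R] M := ε Aᵐᵒᵖ with hE
    set E' : Aᵐᵒᵖ ≃ₗ[R] Aᵐᵒᵖ ⊗[R] M := E.restrictScalars R with hE'
    -- `E` commutes with every `R`-linear endomorphism of `Aᵐᵒᵖ`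
    have hS : ∀ (φ : Aᵐᵒᵖ →ₗ[R] Aᵐᵒᵖ) (y : Aᵐᵒᵖ),
        E' (φ y) = LinearMap.rTensor M φ (E' y) := by
      set u : A ≃ₗ[R] Aᵐᵒᵖ := MulOpposite.opLinearEquiv R with hu
      set S : Submodule R (Aᵐᵒᵖ →ₗ[R] Aᵐᵒᵖ) :=
        { carrier := {φ | ∀ y : Aᵐᵒᵖ, E' (φ y) = LinearMap.rTensor M φ (E' y)}
          add_mem' := fun {φ} {χ} hφ hχ y => by
            simp only [LinearMap.add_apply, map_add, hφ y, hχ y, LinearMap.rTensor_add]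
          zero_mem' := fun y => by
            simp only [LinearMap.zero_apply, map_zero, LinearMap.rTensor_zero]
          smul_mem' := fun r φ hφ y => by
            simp only [LinearMap.smul_apply, map_smul, hφ y, LinearMap.rTensor_smul] } with hSdef
      have key : ∀ t : A ⊗[R] Aᵐᵒᵖ, u.conj (mulLeftRight R A t) ∈ S := by
        intro t
        induction t using TensorProduct.induction_on with
        | zero => rw [map_zero, map_zero]; exact S.zero_mem
        | add s t hs ht => rw [map_add, map_add]; exact S.add_mem hs ht
        | tmul a c =>
          intro y
          have hφeq : u.conj (mulLeftRight R A (a ⊗ₜ c)) =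
              (LinearMap.mulLeft R c) ∘ₗ
                ((LinearMap.toSpanSingleton Aᵐᵒᵖ Aᵐᵒᵖ (op a)).restrictScalars R) := by
            ext y
            simp only [LinearEquiv.conj_apply, LinearMap.coe_comp, Function.comp_apply,
              LinearMap.coe_restrictScalars, LinearMap.toSpanSingleton_apply,
              LinearEquiv.coe_coe, MulOpposite.coe_opLinearEquiv, u]
            simp [mulLeftRight, smul_eq_mul, mul_assoc]
          rw [hφeq]
          have h1 : E (LinearMap.toSpanSingleton Aᵐᵒᵖ Aᵐᵒᵖ (op a) y) =
              LinearMap.rTensor M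
                ((LinearMap.toSpanSingleton Aᵐᵒᵖ Aᵐᵒᵖ (op a)).restrictScalars R) (E y) :=
            hnat Aᵐᵒᵖ Aᵐᵒᵖ (LinearMap.toSpanSingleton Aᵐᵒᵖ Aᵐᵒᵖ (op a)) y
          calc E' ((LinearMap.mulLeft R c) (LinearMap.toSpanSingleton Aᵐᵒᵖ Aᵐᵒᵖ (op a) y))
              = E (c • (LinearMap.toSpanSingleton Aᵐᵒᵖ Aᵐᵒᵖ (op a) y)) := by
                simp [smul_eq_mul, E']
            _ = c • E (LinearMap.toSpanSingleton Aᵐᵒᵖ Aᵐᵒᵖ (op a) y) := map_smul E c _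
            _ = LinearMap.rTensor M (LinearMap.mulLeft R c)
                  (LinearMap.rTensor M
                    ((LinearMap.toSpanSingleton Aᵐᵒᵖ Aᵐᵒᵖ (op a)).restrictScalars R) (E y)) := by
                rw [h1, smul_eq_rTensor_mulLeft]
            _ = LinearMap.rTensor M ((LinearMap.mulLeft R c) ∘ₗ
                  ((LinearMap.toSpanSingleton Aᵐᵒᵖ Aᵐᵒᵖ (op a)).restrictScalars R)) (E' y) := by
                rw [LinearMap.rTensor_comp]; rfl
      intro φ
      obtain ⟨t, ht⟩ := hA.bij.2 (u.conj.symm φ)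
      have : φ = u.conj (mulLeftRight R A t) := by rw [ht]; simp
      rw [this]
      exact key t
    -- dual basis data
    obtain ⟨n, ψ, b, hone⟩ := exists_dual_one R Aᵐᵒᵖ
    set m₀ : M := ∑ i, contr (ψ i) (E' (b i)) with hm₀
    have hE0 : ∀ x : Aᵐᵒᵖ, E' x = x ⊗ₜ[R] m₀ := by
      intro x
      calc E' x = ∑ i, ψ i (b i) • E' x := by
            rw [← Finset.sum_smul, hone, one_smul]
        _ = ∑ i, E' (((ψ i).smulRight x) (b i)) := by
            simp only [LinearMap.smulRight_apply, map_smul]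
        _ = ∑ i, LinearMap.rTensor M ((ψ i).smulRight x) (E' (b i)) := by
            refine Finset.sum_congr rfl fun i _ => hS _ _
        _ = ∑ i, x ⊗ₜ[R] contr (ψ i) (E' (b i)) := by
            refine Finset.sum_congr rfl fun i _ => rTensor_smulRight _ _ _
        _ = x ⊗ₜ[R] m₀ := by rw [hm₀, TensorProduct.tmul_sum]
    have hinj : ∀ m : M, (∀ x : Aᵐᵒᵖ, (x ⊗ₜ[R] m : Aᵐᵒᵖ ⊗[R] M) = 0) → m = 0 := by
      intro m h
      have : m = ∑ i, ψ i (b i) • m := by rw [← Finset.sum_smul, hone, one_smul]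
      rw [this]
      refine Finset.sum_eq_zero fun i _ => ?_
      have := congrArg (contr (ψ i)) (h (b i))
      simpa using this
    -- the map `M → R`
    set α : M →ₗ[R] R :=
      { toFun := fun m => ∑ i, ψ i (E'.symm (b i ⊗ₜ[R] m))
        map_add' := fun m m' => by
          simp [TensorProduct.tmul_add, Finset.sum_add_distrib]
        map_smul' := fun r m => by
          simp [TensorProduct.tmul_smul, Finset.smul_sum, Finset.mul_sum] } with hα
    have hcentral : ∀ (m : M) (x : Aᵐᵒᵖ), E'.symm (x ⊗ₜ[R] m) = α m • x := by
      intro m x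
      have hg : ∀ (φ : Aᵐᵒᵖ →ₗ[R] Aᵐᵒᵖ) (z : Aᵐᵒᵖ),
          E'.symm (φ z ⊗ₜ[R] m) = φ (E'.symm (z ⊗ₜ[R] m)) := by
        intro φ z
        have := hS φ (E'.symm (z ⊗ₜ[R] m))
        rw [E'.apply_symm_apply, LinearMap.rTensor_tmul] at this
        rw [← this, E'.symm_apply_apply]
      calc E'.symm (x ⊗ₜ[R] m)
          = ∑ i, ψ i (b i) • E'.symm (x ⊗ₜ[R] m) := by
            rw [← Finset.sum_smul, hone, one_smul]
        _ = ∑ i, E'.symm ((((ψ i).smulRight x) (b i)) ⊗ₜ[R] m) := by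
            refine Finset.sum_congr rfl fun i _ => ?_
            rw [LinearMap.smulRight_apply, ← TensorProduct.smul_tmul', map_smul]
        _ = ∑ i, ((ψ i).smulRight x) (E'.symm (b i ⊗ₜ[R] m)) := by
            refine Finset.sum_congr rfl fun i _ => hg _ _
        _ = ∑ i, ψ i (E'.symm (b i ⊗ₜ[R] m)) • x := by
            simp only [LinearMap.smulRight_apply]
        _ = α m • x := by rw [← Finset.sum_smul]; rfl
    have hαm : ∀ m : M, α m • m₀ = m := by
      intro m
      have h1 : ∀ x : Aᵐᵒᵖ, (x ⊗ₜ[R] (α m • m₀ - m) : Aᵐᵒᵖ ⊗[R] M) = 0 := by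
        intro x
        have := congrArg E' (hcentral m x)
        rw [E'.apply_symm_apply, map_smul, hE0 x, ← TensorProduct.tmul_smul] at this
        rw [TensorProduct.tmul_sub, this, sub_self]
      exact sub_eq_zero.mp (hinj _ h1)
    refine ⟨LinearEquiv.ofLinear α (LinearMap.toSpanSingleton R M m₀) ?_ ?_⟩
    · ext r
      have hα0 : α m₀ = 1 := by
        have : ∀ i, E'.symm (b i ⊗ₜ[R] m₀) = b i := fun i => by
          rw [← hE0 (b i), E'.symm_apply_apply]
        simp only [hα, LinearMap.coe_mk, AddHom.coe_mk]
        show (∑ i, ψ i (E'.symm (b i ⊗ₜ[R] m₀))) = 1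
        simp only [this]
        exact hone
      simp [LinearMap.toSpanSingleton_apply, map_smul, hα0, smul_eq_mul]
    · ext m
      simp [LinearMap.toSpanSingleton_apply, hαm]
  · rintro ⟨e⟩
    refine ⟨fun N _ _ _ _ _ => tmulRightEquiv R Aᵐᵒᵖ N M e, ?_⟩
    intro N _ _ _ _ _ N' _ _ _ _ _ f x
    rw [tmulRightEquiv_apply, tmulRightEquiv_apply, LinearMap.rTensor_tmul]
    rfl
end
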